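/- Let d ≥ 2 and let c₀ ∈ ℚ̄ be such that f(z) = z^d + c₀ is PCF of exact type (m, n) with m ≥ 1. Let K = ℚ(c₀). Then for every i ≥ 1, the principal ideal ⟨a_i(c₀)⟩ of O_K equals ⟨a_n(c₀)⟩ if n divides i, and equals O_K (i.e., a_i(c₀) is a unit) if n does not divide i. -/

import Mathlib

open NumberField

section Aux

variable {R : Type*} [CommRing R] {d : ℕ} {c₀ : R} {a : ℕ → R}

private lemma auxL1 (ha0 : a 0 = 0) (haS : ∀ i, a (i + 1) = a i ^ d + c₀) :
    ∀ i j, a i ∣ a (i + j) - a j := by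
  intro i j
  induction j with
  | zero => simpa [ha0] using dvd_refl (a i)
  | succ j ih =>
      have h1 : a (i + (j + 1)) - a (j + 1) = a (i + j) ^ d - a j ^ d := by
        rw [show i + (j + 1) = (i + j) + 1 from rfl, haS, haS]; ring
      rw [h1]
      exact ih.trans (sub_dvd_pow_sub_pow _ _ d)

private lemma auxL2 (hd : 2 ≤ d) (ha0 : a 0 = 0) (haS : ∀ i, a (i + 1) = a i ^ d + c₀) :
    ∀ i j, 1 ≤ j → a i ^ 2 ∣ a (i + j) - a j := by
  intro i j hj
  obtain ⟨j', rfl⟩ : ∃ j', j = j' + 1 := ⟨j - 1, by omega⟩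
  induction j' with
  | zero =>
      have h1 : a (i + 1) - a 1 = a i ^ d := by
        rw [haS, show (1:ℕ) = 0 + 1 from rfl, haS, ha0,
          zero_pow (by omega : d ≠ 0)]
        ring
      rw [h1]
      exact pow_dvd_pow (a i) hd
  | succ j ih =>
      have h1 : a (i + (j + 1 + 1)) - a (j + 1 + 1) = a (i + (j + 1)) ^ d - a (j + 1) ^ d := by
        rw [show i + (j + 1 + 1) = (i + (j + 1)) + 1 from rfl, haS, haS]; ring
      rw [h1]
      exact (ih (by omega)).trans (sub_dvd_pow_sub_pow _ _ d)

private lemma auxL4 (ha0 : a 0 = 0) (haS : ∀ i, a (i + 1) = a i ^ d + c₀) :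
    ∀ r k, a r ∣ a (r * k) := by
  intro r k
  induction k with
  | zero => simpa [ha0] using dvd_zero (a r)
  | succ k ih =>
      have h1 : a (r * k) ∣ a (r * k + r) - a r := auxL1 ha0 haS (r * k) r
      have h2 : a r ∣ a (r * k + r) - a r := ih.trans h1
      have h3 : a (r * k + r) = (a (r * k + r) - a r) + a r := by ring
      rw [Nat.mul_succ, h3]
      exact dvd_add h2 dvd_rfl

end Aux

/-- If f(z) = z^d + c₀ is PCF of exact type (m,n) with m ≥ 1 and
K = ℚ(c₀), then for every i ≥ 1 the principal ideal ⟨a_i(c₀)⟩ of O_K equals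
⟨a_n(c₀)⟩ if n ∣ i, and equals O_K if n ∤ i. -/
theorem stmt8 (d : ℕ) (hd : 2 ≤ d) (K : Type*) [Field K] [NumberField K]
    (c₀ : 𝓞 K) (hK : Algebra.adjoin ℚ {algebraMap (𝓞 K) K c₀} = ⊤)
    (a : ℕ → 𝓞 K) (ha0 : a 0 = 0) (haS : ∀ i, a (i + 1) = a i ^ d + c₀)
    (m n : ℕ) (hm : 1 ≤ m) (hn : 1 ≤ n)
    (hper : a (m + n) = a m)
    (hnmin : ∀ k, 0 < k → k < n → a (m + k) ≠ a m)
    (hmmin : ∀ m', m' < m → ∀ k, 0 < k → a (m' + k) ≠ a m') :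
    ∀ i, 1 ≤ i →
      (n ∣ i → Ideal.span {a i} = Ideal.span {a n}) ∧
      (¬ n ∣ i → Ideal.span {a i} = (⊤ : Ideal (𝓞 K))) := by
  classical
  have L1 := auxL1 ha0 haS
  have L2 := auxL2 hd ha0 haS
  have L4 := auxL4 ha0 haS
  -- eventual periodicity
  have aux3 : ∀ s, a ((m + s) + n) = a (m + s) := by
    intro s
    induction s with
    | zero => exact hper
    | succ s ih =>
        rw [show m + (s + 1) + n = (m + s + n) + 1 by omega,
          show m + (s + 1) = (m + s) + 1 from rfl, haS, haS, ih]
  have aux3' : ∀ i, m ≤ i → a (i + n) = a i := by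
    intro i him
    obtain ⟨s, rfl⟩ := Nat.exists_eq_add_of_le him
    exact aux3 s
  have aux3'' : ∀ i, m ≤ i → ∀ t, a (i + t * n) = a i := by
    intro i him t
    induction t with
    | zero => simp
    | succ t ih =>
        rw [show i + (t + 1) * n = (i + t * n) + n by ring,
          aux3' (i + t * n) (le_trans him (Nat.le_add_right _ _)), ih]
  -- no repetition within a period on the cycle
  have L5 : ∀ i, m ≤ i → ∀ k, 0 < k → k < n → a (i + k) ≠ a i := by
    intro i him k hk0 hkn heq
    have hprop : ∀ t, a (i + k + t) = a (i + t) := by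
      intro t
      induction t with
      | zero => exact heq
      | succ t ih =>
          show a ((i + k + t) + 1) = a ((i + t) + 1)
          rw [haS, haS, ih]
    have hge : i ≤ m + i * n := by
      have : i * 1 ≤ i * n := Nat.mul_le_mul_left i hn
      omega
    obtain ⟨t, ht⟩ : ∃ t, i + t = m + i * n := ⟨m + i * n - i, by omega⟩
    have h1 : a (m + i * n + k) = a (m + i * n) := by
      rw [← ht, show i + t + k = i + k + t by ring, hprop, ht]
    have h2 : a (m + i * n) = a m := aux3'' m le_rfl i
    have h3 : a (m + i * n + k) = a (m + k) := by
      rw [show m + i * n + k = (m + k) + i * n by ring]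
      exact aux3'' (m + k) (Nat.le_add_right m k) i
    exact hnmin k hk0 hkn (by rw [← h3, h1, h2])
  -- KEY: any prime containing some a i (i ≥ 1) contains exactly the a_i with n ∣ i
  have KEY : ∀ P : Ideal (𝓞 K), P.IsPrime → ∀ i, 1 ≤ i → a i ∈ P →
      ∀ i', (a i' ∈ P ↔ n ∣ i') := by
    intro P hP i hi hiP
    have memdvd : ∀ {x y : 𝓞 K}, x ∈ P → x ∣ y → y ∈ P := by
      rintro x y hx ⟨c, rfl⟩
      exact P.mul_mem_right c hx
    have hex : ∃ j, 1 ≤ j ∧ a j ∈ P := ⟨i, hi, hiP⟩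
    set r := Nat.find hex with hr
    obtain ⟨hr1, hrP⟩ := Nat.find_spec hex
    have hr0 : 0 < r := hr1
    have hrmin : ∀ j, j < r → ¬(1 ≤ j ∧ a j ∈ P) := fun j hj => Nat.find_min hex hj
    have L6a : ∀ j, r ∣ j → a j ∈ P := by
      rintro j ⟨q, rfl⟩
      exact memdvd hrP (L4 r q)
    have L6b : ∀ j, 1 ≤ j → a j ∈ P → r ∣ j := by
      intro j hj hjP
      by_cases hs : j % r = 0
      · exact Nat.dvd_of_mod_eq_zero hs
      exfalso
      have hdecomp : r * (j / r) + j % r = j := Nat.div_add_mod j r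
      have h1 : a (r * (j / r)) ∈ P := L6a _ ⟨j / r, rfl⟩
      have h2 := L1 (r * (j / r)) (j % r)
      rw [hdecomp] at h2
      have h3 : a j - a (j % r) ∈ P := memdvd h1 h2
      have h4 : a (j % r) ∈ P := by
        have : a (j % r) = a j - (a j - a (j % r)) := by ring
        rw [this]; exact P.sub_mem hjP h3
      exact hrmin (j % r) (Nat.mod_lt j hr0) ⟨by omega, h4⟩
    have hrn : r ∣ n := by
      have hmmr : m ≤ m * r := Nat.le_mul_of_pos_right m hr0
      have h1 : a (m * r + n) = a (m * r) := aux3' (m * r) hmmr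
      have h2 : a (m * r) ∈ P := L6a _ (dvd_mul_left r m)
      have h4 : r ∣ m * r + n := L6b _ (by omega) (by rw [h1]; exact h2)
      exact (Nat.dvd_add_right (dvd_mul_left r m)).mp h4
    have hrn_eq : r = n := by
      by_contra hne
      have hrltn : r < n := lt_of_le_of_ne (Nat.le_of_dvd hn hrn) hne
      set j := m * r with hj
      have hjm : m ≤ j := Nat.le_mul_of_pos_right m hr0
      have hc0ne : a (j + r) - a j ≠ 0 :=
        sub_ne_zero.mpr (L5 j hjm r hr0 hrltn)
      set Cid := Ideal.span {a (j + r) - a j} with hCid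
      set M := P * Cid with hM
      have hstep : ∀ t, a (j + r + (t + 1)) - a (j + (t + 1)) =
          (a (j + r + t) - a (j + t)) *
            (∑ u ∈ Finset.range d, a (j + r + t) ^ u * a (j + t) ^ (d - 1 - u)) := by
        intro t
        have e1 : a (j + r + (t + 1)) = a (j + r + t) ^ d + c₀ := haS (j + r + t)
        have e2 : a (j + (t + 1)) = a (j + t) ^ d + c₀ := haS (j + t)
        rw [e1, e2]
        have := geom_sum₂_mul (a (j + r + t)) (a (j + t)) d
        calc a (j + r + t) ^ d + c₀ - (a (j + t) ^ d + c₀)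
            = a (j + r + t) ^ d - a (j + t) ^ d := by ring
          _ = (∑ u ∈ Finset.range d, a (j + r + t) ^ u * a (j + t) ^ (d - 1 - u)) *
                (a (j + r + t) - a (j + t)) := this.symm
          _ = _ := by ring
      have hcM : ∀ t, 1 ≤ t → a (j + r + t) - a (j + t) ∈ M := by
        intro t ht
        induction t with
        | zero => omega
        | succ t ih =>
            rcases Nat.eq_zero_or_pos t with h0 | hpos
            · subst h0
              rw [hstep 0]
              have hS : (∑ u ∈ Finset.range d, a (j + r + 0) ^ u * a (j + 0) ^ (d - 1 - u)) ∈ P := by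
                apply Ideal.sum_mem
                intro u _
                rcases Nat.eq_zero_or_pos u with hu | hu
                · subst hu
                  have : a (j + 0) ^ (d - 1 - 0) ∈ P :=
                    P.pow_mem_of_mem (L6a j (dvd_mul_left r m)) _ (by omega)
                  exact P.mul_mem_left _ this
                · have : a (j + r + 0) ^ u ∈ P :=
                    P.pow_mem_of_mem (L6a (j + r) ((dvd_mul_left r m).add dvd_rfl)) _ hu
                  exact P.mul_mem_right _ this
              rw [mul_comm]
              exact Ideal.mul_mem_mul hS (Ideal.mem_span_singleton_self _)
            · rw [hstep t]
              exact Ideal.mul_mem_right _ M (ih hpos)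
      have hcn : a (j + r) - a j ∈ M := by
        have h1 : a (j + r + n) = a (j + r) := aux3' (j + r) (le_trans hjm (Nat.le_add_right _ _))
        have h2 : a (j + n) = a j := aux3' j hjm
        have := hcM n hn
        rwa [h1, h2] at this
      have hC0 : Cid ≠ 0 := by
        simpa [hCid, Ideal.span_singleton_eq_bot, Ideal.zero_eq_bot] using hc0ne
      have hle : Cid ≤ M := (Ideal.span_singleton_le_iff_mem _).mpr hcn
      obtain ⟨D, hD⟩ := Ideal.dvd_iff_le.mpr hle
      have hcancel : Cid * 1 = Cid * (P * D) := by
        conv_lhs => rw [mul_one, hD, hM]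
        ring
      have h1 : (1 : Ideal (𝓞 K)) = P * D := mul_left_cancel₀ hC0 hcancel
      have : IsUnit P := IsUnit.of_mul_eq_one (a := P) D h1.symm
      exact hP.ne_top (Ideal.isUnit_iff.mp this)
    intro i'
    constructor
    · intro hi'P
      rcases Nat.eq_zero_or_pos i' with h0 | hpos
      · subst h0; exact dvd_zero n
      · exact hrn_eq ▸ L6b i' hpos hi'P
    · intro hdvd
      exact L6a i' (hrn_eq ▸ hdvd)
  -- Part (A)
  have A : ∀ i, 1 ≤ i → ¬ n ∣ i → Ideal.span {a i} = ⊤ := by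
    intro i hi hndvd
    by_contra htop
    obtain ⟨M, hM, hle⟩ := Ideal.exists_le_maximal _ htop
    have hmem : a i ∈ M := hle (Ideal.mem_span_singleton_self _)
    exact hndvd ((KEY M hM.isPrime i hi hmem i).mp hmem)
  -- Part (B)
  have B : ∀ k, 1 ≤ k → Ideal.span {a (n * k)} = Ideal.span {a n} := by
    intro k hk
    induction k with
    | zero => omega
    | succ k ih =>
        rcases Nat.eq_zero_or_pos k with h0 | hk1
        · subst h0; norm_num
        · have ihh := ih hk1
          have hassoc : Associated (a (n * k)) (a n) :=
            Ideal.span_singleton_eq_span_singleton.mp ihh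
          obtain ⟨u, hu⟩ := hassoc
          have hankn : a (n * k) = a n * ↑u⁻¹ := by
            rw [← hu, Units.mul_inv_cancel_right]
          obtain ⟨t, ht⟩ := L2 (n * k) n hn
          set z : 𝓞 K := 1 + a n * ((↑u⁻¹ * ↑u⁻¹) * t) with hz
          have key_eq : a (n * k + n) = a n * z := by
            have h1 : a (n * k + n) = a n + a (n * k) ^ 2 * t := by
              have := ht; linear_combination this
            rw [h1, hankn, hz]; ring
          have hzu : IsUnit z := by
            by_contra hzu
            have hztop : Ideal.span {z} ≠ ⊤ := fun h =>
              hzu (Ideal.span_singleton_eq_top.mp h)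
            obtain ⟨M, hM, hle⟩ := Ideal.exists_le_maximal _ hztop
            have hzM : z ∈ M := hle (Ideal.mem_span_singleton_self _)
            have h1 : a (n * k + n) ∈ M := by
              rw [key_eq]; exact M.mul_mem_left _ hzM
            have h2 : a n ∈ M :=
              (KEY M hM.isPrime (n * k + n) (by omega) h1 n).mpr dvd_rfl
            have h3 : (1 : 𝓞 K) ∈ M := by
              have e : (1 : 𝓞 K) = z - a n * ((↑u⁻¹ * ↑u⁻¹) * t) := by
                rw [hz]; ring
              rw [e]
              exact M.sub_mem hzM (M.mul_mem_right _ h2)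
            exact hM.ne_top ((Ideal.eq_top_iff_one M).mpr h3)
          have hidx : n * (k + 1) = n * k + n := by ring
          rw [hidx, Ideal.span_singleton_eq_span_singleton, key_eq]
          exact associated_mul_unit_left (a n) z hzu
  intro i hi
  constructor
  · rintro ⟨k, rfl⟩
    have hk1 : 1 ≤ k := by
      rcases Nat.eq_zero_or_pos k with h0 | h1
      · subst h0; omega
      · exact h1
    exact B k hk1
  · intro h
    exact A i hi h
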